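/- For every integer k ≥ 0, the tree H(k) satisfies lmw(H(k)) = k. -/

import Mathlib

open scoped Classical

noncomputable section

namespace LMW

variable {V : Type*} [Fintype V]

/-- The bipartite graph `G[Vᵢ, V̄ᵢ]` consisting of the edges of `G` crossing the cut at
position `i` of the linear layout `σ` (here `Vᵢ` is the set of the first `i` vertices
in the layout). -/
def cutGraph (G : SimpleGraph V) (σ : V ≃ Fin (Fintype.card V)) (i : ℕ) : SimpleGraph V where
  Adj u v := G.Adj u v ∧
    (((σ u : ℕ) < i ∧ i ≤ (σ v : ℕ)) ∨ ((σ v : ℕ) < i ∧ i ≤ (σ u : ℕ)))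
  symm := by
    constructor
    intro u v h
    exact ⟨h.1.symm, h.2.symm⟩
  loopless := by
    constructor
    intro u h
    exact G.loopless.irrefl u h.1

/-- `M` is an induced matching in `H`: a set of edges of `H` such that any two distinct
edges of `M` share no endpoint and no endpoint of one is adjacent in `H` to an endpoint
of the other. -/
def IsInducedMatching (H : SimpleGraph V) (M : Finset (Sym2 V)) : Prop :=
  (↑M : Set (Sym2 V)) ⊆ H.edgeSet ∧
    ∀ e ∈ M, ∀ f ∈ M, e ≠ f → ∀ u ∈ e, ∀ v ∈ f, u ≠ v ∧ ¬ H.Adj u v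

/-- `mim H` is the size of a maximum induced matching of `H`. -/
def mim (H : SimpleGraph V) : ℕ :=
  sSup {n : ℕ | ∃ M : Finset (Sym2 V), IsInducedMatching H M ∧ M.card = n}

/-- The MIM-width of `G` under the linear layout `σ`: the maximum over all cuts
`1 ≤ i < |V|` of the size of a maximum induced matching of the cut graph. -/
def mw (G : SimpleGraph V) (σ : V ≃ Fin (Fintype.card V)) : ℕ :=
  (Finset.Ico 1 (Fintype.card V)).sup fun i => mim (cutGraph G σ i)

/-- The linear MIM-width of `G`: the minimum of `mw G σ` over all linear layouts `σ`. -/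
def lmw (G : SimpleGraph V) : ℕ :=
  sInf {m : ℕ | ∃ σ : V ≃ Fin (Fintype.card V), mw G σ = m}

/-- Vertex type of the tree `H k`:  `H 0` is a single vertex; `H (k+1)` consists of a root
`u = Sum.inl ()`, three children `vᵢ = Sum.inr (i, Sum.inl ())` and, below each `vᵢ`, three
copies of `H k`, the `j`-th copy having vertices `Sum.inr (i, Sum.inr (j, a))`. -/
def HV : ℕ → Type
  | 0 => Unit
  | k + 1 => Unit ⊕ (Fin 3 × (Unit ⊕ (Fin 3 × HV k)))

instance instDecEqHV : ∀ k, DecidableEq (HV k)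
  | 0 => inferInstanceAs (DecidableEq Unit)
  | k + 1 =>
    letI := instDecEqHV k
    inferInstanceAs (DecidableEq (Unit ⊕ (Fin 3 × (Unit ⊕ (Fin 3 × HV k)))))

instance instFintypeHV : ∀ k, Fintype (HV k)
  | 0 => inferInstanceAs (Fintype Unit)
  | k + 1 =>
    letI := instFintypeHV k
    inferInstanceAs (Fintype (Unit ⊕ (Fin 3 × (Unit ⊕ (Fin 3 × HV k)))))

/-- The root of `H k`. -/
def Hroot : ∀ k, HV k
  | 0 => ()
  | _ + 1 => Sum.inl ()

/-- The tree `H k`: the root `u` is adjacent to the three children `vᵢ`, each child `vᵢ` is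
adjacent to the roots of its three copies of `H k`, and within each copy the edges are those
of `H k`. -/
def Hgraph : ∀ k, SimpleGraph (HV k)
  | 0 => ⊥
  | k + 1 => SimpleGraph.fromRel (fun x y : HV (k + 1) =>
      (∃ i : Fin 3, x = Sum.inl () ∧ y = Sum.inr (i, Sum.inl ())) ∨
      (∃ (i j : Fin 3), x = Sum.inr (i, Sum.inl ()) ∧ y = Sum.inr (i, Sum.inr (j, Hroot k))) ∨
      (∃ (i j : Fin 3) (a b : HV k), x = Sum.inr (i, Sum.inr (j, a)) ∧
        y = Sum.inr (i, Sum.inr (j, b)) ∧ (Hgraph k).Adj a b))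

variable {k : ℕ}

/-- root of `H (k+1)` -/
def Hu (k : ℕ) : HV (k+1) := Sum.inl ()
/-- the children `vᵢ` -/
def Hv (k : ℕ) (m : Fin 3) : HV (k+1) := Sum.inr (m, Sum.inl ())
/-- embedding of the `(m,j)` copy -/
def Hemb (k : ℕ) (m j : Fin 3) (a : HV k) : HV (k+1) := Sum.inr (m, Sum.inr (j, a))

@[simp] lemma HV_inr_inj {x y : Fin 3 × (Unit ⊕ (Fin 3 × HV k))} :
    @Eq (HV (k+1)) (Sum.inr x) (Sum.inr y) ↔ x = y :=
  ⟨fun h => by injection h, fun h => by rw [h]⟩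

@[simp] lemma HV_inl_ne_inr {x : Fin 3 × (Unit ⊕ (Fin 3 × HV k))} {u : Unit} :
    ¬ (@Eq (HV (k+1)) (Sum.inl u) (Sum.inr x)) := fun h => by injection h

@[simp] lemma HV_inr_ne_inl {x : Fin 3 × (Unit ⊕ (Fin 3 × HV k))} {u : Unit} :
    ¬ (@Eq (HV (k+1)) (Sum.inr x) (Sum.inl u)) := fun h => by injection h

lemma Hemb_inj {m j : Fin 3} : Function.Injective (Hemb k m j) := by
  intro a b h
  simpa [Hemb] using h

@[simp] lemma Hemb_eq_Hemb {m j m' j' : Fin 3} {a a' : HV k} :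
    Hemb k m j a = Hemb k m' j' a' ↔ m = m' ∧ j = j' ∧ a = a' := by
  simp [Hemb, Prod.ext_iff]

@[simp] lemma Hu_ne_Hv {m : Fin 3} : ¬ (Hu k = Hv k m) := by simp [Hu, Hv]
@[simp] lemma Hv_ne_Hu {m : Fin 3} : ¬ (Hv k m = Hu k) := by simp [Hu, Hv]
@[simp] lemma Hu_ne_Hemb {m j : Fin 3} {a : HV k} : ¬ (Hu k = Hemb k m j a) := by
  simp [Hu, Hemb]
@[simp] lemma Hemb_ne_Hu {m j : Fin 3} {a : HV k} : ¬ (Hemb k m j a = Hu k) := by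
  simp [Hu, Hemb]
@[simp] lemma Hv_ne_Hemb {m m' j : Fin 3} {a : HV k} : ¬ (Hv k m = Hemb k m' j a) := by
  simp [Hv, Hemb, Prod.ext_iff]
@[simp] lemma Hemb_ne_Hv {m m' j : Fin 3} {a : HV k} : ¬ (Hemb k m' j a = Hv k m) := by
  simp [Hv, Hemb, Prod.ext_iff]
@[simp] lemma Hv_eq_Hv {m m' : Fin 3} : Hv k m = Hv k m' ↔ m = m' := by
  simp [Hv, Prod.ext_iff]

lemma HV_cases (x : HV (k+1)) : x = Hu k ∨ (∃ m, x = Hv k m) ∨ ∃ m j a, x = Hemb k m j a := by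
  rcases x with x | ⟨m, x | ⟨j, a⟩⟩
  · exact Or.inl rfl
  · exact Or.inr (Or.inl ⟨m, rfl⟩)
  · exact Or.inr (Or.inr ⟨m, j, a, rfl⟩)

lemma Hgraph_succ (k : ℕ) : Hgraph (k+1) = SimpleGraph.fromRel (fun x y : HV (k + 1) =>
      (∃ i : Fin 3, x = Sum.inl () ∧ y = Sum.inr (i, Sum.inl ())) ∨
      (∃ (i j : Fin 3), x = Sum.inr (i, Sum.inl ()) ∧ y = Sum.inr (i, Sum.inr (j, Hroot k))) ∨
      (∃ (i j : Fin 3) (a b : HV k), x = Sum.inr (i, Sum.inr (j, a)) ∧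
        y = Sum.inr (i, Sum.inr (j, b)) ∧ (Hgraph k).Adj a b)) := rfl

lemma HgraphR_iff (x y : HV (k+1)) :
    ((∃ i : Fin 3, x = Sum.inl () ∧ y = Sum.inr (i, Sum.inl ())) ∨
      (∃ (i j : Fin 3), x = Sum.inr (i, Sum.inl ()) ∧ y = Sum.inr (i, Sum.inr (j, Hroot k))) ∨
      (∃ (i j : Fin 3) (a b : HV k), x = Sum.inr (i, Sum.inr (j, a)) ∧
        y = Sum.inr (i, Sum.inr (j, b)) ∧ (Hgraph k).Adj a b)) ↔
    ((∃ m, x = Hu k ∧ y = Hv k m) ∨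
      (∃ m j, x = Hv k m ∧ y = Hemb k m j (Hroot k)) ∨
      (∃ m j a b, x = Hemb k m j a ∧ y = Hemb k m j b ∧ (Hgraph k).Adj a b)) := by
  rfl

lemma adj_succ_iff {x y : HV (k+1)} :
    (Hgraph (k+1)).Adj x y ↔ x ≠ y ∧
      (((∃ m, x = Hu k ∧ y = Hv k m) ∨
        (∃ m j, x = Hv k m ∧ y = Hemb k m j (Hroot k)) ∨
        (∃ m j a b, x = Hemb k m j a ∧ y = Hemb k m j b ∧ (Hgraph k).Adj a b)) ∨
       ((∃ m, y = Hu k ∧ x = Hv k m) ∨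
        (∃ m j, y = Hv k m ∧ x = Hemb k m j (Hroot k)) ∨
        (∃ m j a b, y = Hemb k m j a ∧ x = Hemb k m j b ∧ (Hgraph k).Adj a b))) := by
  rw [Hgraph_succ, SimpleGraph.fromRel_adj, HgraphR_iff, HgraphR_iff]

lemma adj_lift {m j : Fin 3} {a b : HV k} (h : (Hgraph k).Adj a b) :
    (Hgraph (k+1)).Adj (Hemb k m j a) (Hemb k m j b) := by
  rw [adj_succ_iff]
  refine ⟨by simp [h.ne], Or.inl (Or.inr (Or.inr ⟨m, j, a, b, rfl, rfl, h⟩))⟩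

lemma adj_uv {m : Fin 3} : (Hgraph (k+1)).Adj (Hu k) (Hv k m) := by
  rw [adj_succ_iff]
  exact ⟨by simp, Or.inl (Or.inl ⟨m, rfl, rfl⟩)⟩

lemma adj_vroot {m j : Fin 3} : (Hgraph (k+1)).Adj (Hv k m) (Hemb k m j (Hroot k)) := by
  rw [adj_succ_iff]
  exact ⟨by simp, Or.inl (Or.inr (Or.inl ⟨m, j, rfl, rfl⟩))⟩

lemma adj_u_iff {w : HV (k+1)} : (Hgraph (k+1)).Adj (Hu k) w ↔ ∃ m, w = Hv k m := by
  constructor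
  · rw [adj_succ_iff]
    rintro ⟨hne, h | h⟩ <;>
      rcases h with (⟨m, hx, hy⟩ | ⟨m, j, hx, hy⟩ | ⟨m, j, a, b, hx, hy, hadj⟩) <;>
      simp_all <;> exact ⟨m, rfl⟩
  · rintro ⟨m, rfl⟩; exact adj_uv

lemma adj_v_iff {m : Fin 3} {w : HV (k+1)} :
    (Hgraph (k+1)).Adj (Hv k m) w ↔ w = Hu k ∨ ∃ j, w = Hemb k m j (Hroot k) := by
  constructor
  · rw [adj_succ_iff]
    rintro ⟨hne, h | h⟩ <;>
      rcases h with (⟨m', hx, hy⟩ | ⟨m', j, hx, hy⟩ | ⟨m', j, a, b, hx, hy, hadj⟩)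
    · exact absurd hx Hv_ne_Hu
    · rcases Hv_eq_Hv.mp hx with rfl
      exact Or.inr ⟨j, hy⟩
    · exact absurd hx Hv_ne_Hemb
    · exact Or.inl hx
    · exact absurd hy Hv_ne_Hemb
    · exact absurd hy Hv_ne_Hemb
  · rintro (rfl | ⟨j, rfl⟩)
    · exact adj_uv.symm
    · exact adj_vroot

lemma adj_emb_iff {m j : Fin 3} {a : HV k} {w : HV (k+1)} :
    (Hgraph (k+1)).Adj (Hemb k m j a) w ↔
      (a = Hroot k ∧ w = Hv k m) ∨ ∃ b, w = Hemb k m j b ∧ (Hgraph k).Adj a b := by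
  constructor
  · rw [adj_succ_iff]
    rintro ⟨hne, h | h⟩ <;>
      rcases h with (⟨m', hx, hy⟩ | ⟨m', j', hx, hy⟩ | ⟨m', j', a', b', hx, hy, hadj⟩)
    · exact absurd hx Hemb_ne_Hu
    · exact absurd hx Hemb_ne_Hv
    · rcases Hemb_eq_Hemb.mp hx with ⟨rfl, rfl, rfl⟩
      exact Or.inr ⟨b', hy, hadj⟩
    · exact absurd hy Hemb_ne_Hv
    · rcases Hemb_eq_Hemb.mp hy with ⟨rfl, rfl, rfl⟩
      exact Or.inl ⟨rfl, hx⟩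
    · rcases Hemb_eq_Hemb.mp hy with ⟨rfl, rfl, rfl⟩
      exact Or.inr ⟨a', hx, hadj.symm⟩
  · rintro (⟨rfl, rfl⟩ | ⟨b, rfl, hadj⟩)
    · exact adj_vroot.symm
    · exact adj_lift hadj

lemma adj_emb_emb {m j : Fin 3} {a b : HV k} :
    (Hgraph (k+1)).Adj (Hemb k m j a) (Hemb k m j b) ↔ (Hgraph k).Adj a b := by
  constructor
  · rw [adj_emb_iff]
    rintro (⟨rfl, h⟩ | ⟨b', hb, hadj⟩)
    · exact absurd h Hemb_ne_Hv
    · rcases Hemb_eq_Hemb.mp hb with ⟨-, -, rfl⟩; exact hadj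
  · exact adj_lift

/-- classification of the edges of `H (k+1)` -/
lemma adj_classify {x y : HV (k+1)} (h : (Hgraph (k+1)).Adj x y) :
    (∃ m, (x = Hu k ∧ y = Hv k m) ∨ (y = Hu k ∧ x = Hv k m)) ∨
    (∃ m j, (x = Hv k m ∧ y = Hemb k m j (Hroot k)) ∨ (y = Hv k m ∧ x = Hemb k m j (Hroot k))) ∨
    (∃ m j a b, x = Hemb k m j a ∧ y = Hemb k m j b ∧ (Hgraph k).Adj a b) := by
  rcases HV_cases x with rfl | ⟨m, rfl⟩ | ⟨m, j, a, rfl⟩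
  · rcases adj_u_iff.mp h with ⟨m, rfl⟩
    exact Or.inl ⟨m, Or.inl ⟨rfl, rfl⟩⟩
  · rcases adj_v_iff.mp h with rfl | ⟨j, rfl⟩
    · exact Or.inl ⟨m, Or.inr ⟨rfl, rfl⟩⟩
    · exact Or.inr (Or.inl ⟨m, j, Or.inl ⟨rfl, rfl⟩⟩)
  · rcases adj_emb_iff.mp h with ⟨rfl, rfl⟩ | ⟨b, rfl, hadj⟩
    · exact Or.inr (Or.inl ⟨m, j, Or.inr ⟨rfl, rfl⟩⟩)
    · exact Or.inr (Or.inr ⟨m, j, a, b, rfl, rfl, hadj⟩)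

/-! ### Cross graphs with respect to arbitrary position functions -/

/-- The analogue of `cutGraph` for an arbitrary position function. -/
def crossGraph (G : SimpleGraph V) (pos : V → ℕ) (i : ℕ) : SimpleGraph V where
  Adj u v := G.Adj u v ∧
    ((pos u < i ∧ i ≤ pos v) ∨ (pos v < i ∧ i ≤ pos u))
  symm := by
    constructor
    intro u v h
    exact ⟨h.1.symm, h.2.symm⟩
  loopless := by
    constructor
    intro u h
    exact G.loopless.irrefl u h.1

lemma cutGraph_eq_crossGraph (G : SimpleGraph V) (σ : V ≃ Fin (Fintype.card V)) (i : ℕ) :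
    cutGraph G σ i = crossGraph G (fun v => (σ v : ℕ)) i := rfl

lemma crossGraph_adj {G : SimpleGraph V} {pos : V → ℕ} {i : ℕ} {u v : V} :
    (crossGraph G pos i).Adj u v ↔ G.Adj u v ∧
      ((pos u < i ∧ i ≤ pos v) ∨ (pos v < i ∧ i ≤ pos u)) := Iff.rfl

/-! ### Basic facts about `mim`, `mw`, `lmw` -/

lemma isInducedMatching_empty (H : SimpleGraph V) : IsInducedMatching H ∅ := by
  constructor
  · simp
  · intro e he; simp at he

lemma card_le_mim {H : SimpleGraph V} {M : Finset (Sym2 V)} (h : IsInducedMatching H M) :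
    M.card ≤ mim H := by
  apply le_csSup
  · exact ⟨Fintype.card (Sym2 V), fun n ⟨N, _, hc⟩ => hc ▸ N.card_le_univ⟩
  · exact ⟨M, h, rfl⟩

lemma mim_le {H : SimpleGraph V} {m : ℕ}
    (h : ∀ M : Finset (Sym2 V), IsInducedMatching H M → M.card ≤ m) : mim H ≤ m := by
  apply csSup_le
  · exact ⟨0, ∅, isInducedMatching_empty H, rfl⟩
  · rintro n ⟨M, hM, rfl⟩
    exact h M hM

lemma lmw_le {G : SimpleGraph V} {m : ℕ} (σ : V ≃ Fin (Fintype.card V))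
    (h : mw G σ ≤ m) : lmw G ≤ m :=
  le_trans (Nat.sInf_le ⟨σ, rfl⟩) h

lemma le_lmw {G : SimpleGraph V} {m : ℕ} (h : ∀ σ : V ≃ Fin (Fintype.card V), m ≤ mw G σ) :
    m ≤ lmw G := by
  apply le_csInf
  · exact ⟨mw G (Fintype.equivFin V), Fintype.equivFin V, rfl⟩
  · rintro b ⟨σ, rfl⟩
    exact h σ

/-! ### Connectivity of `H k` -/

/-- the copy embedding as a graph homomorphism -/
def Hhom (k : ℕ) (m j : Fin 3) : Hgraph k →g Hgraph (k+1) :=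
  ⟨Hemb k m j, adj_lift⟩

lemma reachable_root : ∀ (k : ℕ) (x : HV k), (Hgraph k).Reachable x (Hroot k)
  | 0, x => by
    cases x
    exact SimpleGraph.Reachable.refl _
  | k+1, x => by
    rcases HV_cases x with rfl | ⟨m, rfl⟩ | ⟨m, j, a, rfl⟩
    · exact SimpleGraph.Reachable.refl _
    · exact (adj_uv (m := m)).symm.reachable
    · have h1 : (Hgraph (k+1)).Reachable (Hemb k m j a) (Hemb k m j (Hroot k)) :=
        (reachable_root k a).map (Hhom k m j)
      exact h1.trans ((adj_vroot (m := m) (j := j)).symm.reachable.trans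
        (adj_uv (m := m)).symm.reachable)

lemma preconnected_Hgraph (k : ℕ) : (Hgraph k).Preconnected :=
  fun x y => (reachable_root k x).trans (reachable_root k y).symm

/-- on a walk from the left of a cut to its right there is a crossing edge -/
lemma exists_cross_edge {V' : Type*} {G : SimpleGraph V'} {pos : V' → ℕ} {t : ℕ} :
    ∀ {x y : V'}, G.Walk x y → pos x < t → t ≤ pos y →
      ∃ a b, G.Adj a b ∧ pos a < t ∧ t ≤ pos b := by
  intro x y w
  induction w with
  | nil => intro hx hy; omega
  | @cons x c y h w ih =>
    intro hx hy
    by_cases hc : pos c < t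
    · exact ih hc hy
    · exact ⟨x, c, h, hx, by omega⟩

/-! ### The lower bound -/

lemma Hroot_succ (k : ℕ) : Hroot (k+1) = Hu k := rfl

lemma crossGraph_emb_adj {pos : HV (k+1) → ℕ} {τ : ℕ} {m j : Fin 3} {a b : HV k} :
    (crossGraph (Hgraph (k+1)) pos τ).Adj (Hemb k m j a) (Hemb k m j b) ↔
      (crossGraph (Hgraph k) (fun v => pos (Hemb k m j v)) τ).Adj a b := by
  simp only [crossGraph_adj, adj_emb_emb]

lemma emb_adj_outside {m j : Fin 3} {a : HV k} {w : HV (k+1)} (ha : a ≠ Hroot k)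
    (hadj : (Hgraph (k+1)).Adj (Hemb k m j a) w) : ∃ b, w = Hemb k m j b := by
  rcases adj_emb_iff.mp hadj with ⟨h, -⟩ | ⟨b, rfl, -⟩
  · exact absurd h ha
  · exact ⟨b, rfl⟩

/-- the copy embedding on edges -/
def embSym (k : ℕ) (m j : Fin 3) : Sym2 (HV k) ↪ Sym2 (HV (k+1)) :=
  ⟨Sym2.map (Hemb k m j), Sym2.map.injective Hemb_inj⟩

lemma isInducedMatching_map_emb {pos : HV (k+1) → ℕ} {τ : ℕ} {m j : Fin 3}
    {M : Finset (Sym2 (HV k))}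
    (h : IsInducedMatching (crossGraph (Hgraph k) (fun v => pos (Hemb k m j v)) τ) M) :
    IsInducedMatching (crossGraph (Hgraph (k+1)) pos τ) (M.map (embSym k m j)) := by
  constructor
  · intro e he
    rw [Finset.mem_coe, Finset.mem_map] at he
    obtain ⟨e', he', rfl⟩ := he
    obtain ⟨a, b, rfl⟩ : ∃ a b, e' = s(a, b) := Sym2.exists.mp ⟨e', rfl⟩
    obtain ⟨hadj, hcross⟩ := h.1 (Finset.mem_coe.mpr he')
    show (Sym2.map (Hemb k m j) s(a, b)) ∈ _
    rw [Sym2.map_pair_eq, SimpleGraph.mem_edgeSet]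
    exact ⟨adj_lift hadj, hcross⟩
  · intro e he f hf hef u hu v hv
    rw [Finset.mem_map] at he hf
    obtain ⟨e', he', rfl⟩ := he
    obtain ⟨f', hf', rfl⟩ := hf
    have hne : e' ≠ f' := fun hh => hef (by rw [hh])
    have hu' := hu; have hv' := hv
    rw [show ((embSym k m j) e' : Sym2 (HV (k+1))) = Sym2.map (Hemb k m j) e' from rfl,
      Sym2.mem_map] at hu'
    rw [show ((embSym k m j) f' : Sym2 (HV (k+1))) = Sym2.map (Hemb k m j) f' from rfl,
      Sym2.mem_map] at hv'
    obtain ⟨a, ha, rfl⟩ := hu'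
    obtain ⟨b, hb, rfl⟩ := hv'
    obtain ⟨hab, hnadj⟩ := h.2 e' he' f' hf' hne a ha b hb
    refine ⟨fun hh => hab (Hemb_inj hh), fun hh => hnadj ?_⟩
    exact crossGraph_emb_adj.mp hh

/-- the badness predicate: every edge crossing the cut `τ` touches the root `u`
or the copy `(0,j)` -/
def BadPred (k : ℕ) (pos : HV (k+2) → ℕ) (j : Fin 3) (τ : ℕ) : Prop :=
  ∀ x y, (Hgraph (k+2)).Adj x y → pos x < τ → τ ≤ pos y →
    (x = Hu (k+1) ∨ y = Hu (k+1) ∨ (∃ a, x = Hemb (k+1) 0 j a) ∨ (∃ a, y = Hemb (k+1) 0 j a))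

lemma copySide {pos : HV (k+2) → ℕ} {τ : ℕ} {j j' : Fin 3} (hne : j' ≠ j)
    (hbad : BadPred k pos j τ) :
    (∀ a : HV (k+1), pos (Hemb (k+1) 0 j' a) < τ) ∨
      (∀ a : HV (k+1), τ ≤ pos (Hemb (k+1) 0 j' a)) := by
  by_contra hcon
  push_neg at hcon
  obtain ⟨⟨a, ha⟩, ⟨b, hb⟩⟩ := hcon
  obtain ⟨w⟩ := preconnected_Hgraph (k+1) b a
  obtain ⟨c, d, hcd, hc, hd⟩ :=
    exists_cross_edge (pos := fun v => pos (Hemb (k+1) 0 j' v)) w hb ha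
  rcases hbad _ _ (adj_lift hcd) hc hd with h | h | ⟨a', h⟩ | ⟨a', h⟩
  · exact absurd h Hemb_ne_Hu
  · exact absurd h Hemb_ne_Hu
  · exact hne (Hemb_eq_Hemb.mp h).2.1
  · exact hne (Hemb_eq_Hemb.mp h).2.1

lemma vSide {pos : HV (k+2) → ℕ} {τ : ℕ} {j j' : Fin 3} (hne : j' ≠ j)
    (hbad : BadPred k pos j τ) :
    ¬(pos (Hv (k+1) 0) < τ ∧ τ ≤ pos (Hemb (k+1) 0 j' (Hroot (k+1)))) ∧
    ¬(pos (Hemb (k+1) 0 j' (Hroot (k+1))) < τ ∧ τ ≤ pos (Hv (k+1) 0)) := by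
  constructor
  · rintro ⟨h1, h2⟩
    rcases hbad _ _ adj_vroot h1 h2 with h | h | ⟨a', h⟩ | ⟨a', h⟩
    · exact absurd h Hv_ne_Hu
    · exact absurd h Hemb_ne_Hu
    · exact absurd h Hv_ne_Hemb
    · exact hne (Hemb_eq_Hemb.mp h).2.1
  · rintro ⟨h1, h2⟩
    rcases hbad _ _ adj_vroot.symm h1 h2 with h | h | ⟨a', h⟩ | ⟨a', h⟩
    · exact absurd h Hemb_ne_Hu
    · exact absurd h Hv_ne_Hu
    · exact hne (Hemb_eq_Hemb.mp h).2.1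
    · exact absurd h Hv_ne_Hemb

lemma lowerQ : ∀ (k : ℕ) (pos : HV k → ℕ), Function.Injective pos →
    ∃ (τ : ℕ) (M : Finset (Sym2 (HV k))),
      IsInducedMatching (crossGraph (Hgraph k) pos τ) M ∧ M.card = k ∧
      ∀ e ∈ M, Hroot k ∉ e
  | 0, pos, _ => ⟨0, ∅, isInducedMatching_empty _, by simp, by simp⟩
  | 1, pos, hpos => by
    have hxy : (Hgraph 1).Adj (Hv 0 0) (Hemb 0 0 0 (Hroot 0)) := adj_vroot
    have hne : pos (Hv 0 0) ≠ pos (Hemb 0 0 0 (Hroot 0)) := by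
      intro h
      exact Hv_ne_Hemb (hpos h)
    refine ⟨max (pos (Hv 0 0)) (pos (Hemb 0 0 0 (Hroot 0))),
      {s(Hv 0 0, Hemb 0 0 0 (Hroot 0))}, ⟨?_, ?_⟩, by simp, ?_⟩
    · intro e he
      rw [Finset.coe_singleton, Set.mem_singleton_iff] at he
      subst he
      rw [SimpleGraph.mem_edgeSet]
      exact ⟨hxy, by omega⟩
    · intro e he f hf hef
      rw [Finset.mem_singleton] at he hf
      exact absurd (he.trans hf.symm) hef
    · intro e he
      rw [Finset.mem_singleton] at he
      subst he
      rw [Hroot_succ, Sym2.mem_iff]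
      push_neg
      exact ⟨Hu_ne_Hv, Hu_ne_Hemb⟩
  | (k+2), pos, hpos => by
    have IH : ∀ j : Fin 3, ∃ (τ : ℕ) (M : Finset (Sym2 (HV (k+1)))),
        IsInducedMatching
          (crossGraph (Hgraph (k+1)) (fun v => pos (Hemb (k+1) 0 j v)) τ) M ∧
        M.card = k+1 ∧ ∀ e ∈ M, Hroot (k+1) ∉ e :=
      fun j => lowerQ (k+1) _ (hpos.comp Hemb_inj)
    choose τ M hind hcard hroot using IH
    have key : ∀ j : Fin 3, ∃ x y : HV (k+1), (Hgraph (k+1)).Adj x y ∧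
        pos (Hemb (k+1) 0 j x) < τ j ∧ τ j ≤ pos (Hemb (k+1) 0 j y) := by
      intro j
      have hMne : (M j).Nonempty := Finset.card_pos.mp (by rw [hcard]; omega)
      obtain ⟨e, he⟩ := hMne
      obtain ⟨x, y, hxy⟩ := Sym2.exists.mp ⟨e, he⟩
      obtain ⟨hadj, hcross⟩ := (hind j).1 (Finset.mem_coe.mpr hxy)
      rcases hcross with ⟨h1, h2⟩ | ⟨h1, h2⟩
      · exact ⟨x, y, hadj, h1, h2⟩
      · exact ⟨y, x, hadj.symm, h1, h2⟩
    choose X Y hXY hXlt hYge using key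
    have main : ∃ j : Fin 3, ¬ BadPred k pos j (τ j) := by
      by_contra hall
      push_neg at hall
      have D : ∀ j j' : Fin 3, j' ≠ j →
          (pos (Hemb (k+1) 0 j' (X j')) < τ j ∧ pos (Hemb (k+1) 0 j' (Y j')) < τ j ∧
            pos (Hemb (k+1) 0 j' (Hroot (k+1))) < τ j) ∨
          (τ j ≤ pos (Hemb (k+1) 0 j' (X j')) ∧ τ j ≤ pos (Hemb (k+1) 0 j' (Y j')) ∧
            τ j ≤ pos (Hemb (k+1) 0 j' (Hroot (k+1)))) := by
        intro j j' hne
        rcases copySide hne (hall j) with h | h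
        · exact Or.inl ⟨h _, h _, h _⟩
        · exact Or.inr ⟨h _, h _, h _⟩
      have V : ∀ j j' : Fin 3, j' ≠ j →
          ¬(pos (Hv (k+1) 0) < τ j ∧ τ j ≤ pos (Hemb (k+1) 0 j' (Hroot (k+1)))) ∧
          ¬(pos (Hemb (k+1) 0 j' (Hroot (k+1))) < τ j ∧ τ j ≤ pos (Hv (k+1) 0)) :=
        fun j j' hne => vSide hne (hall j)
      have d01 := D 0 1 (by decide); have d02 := D 0 2 (by decide)
      have d10 := D 1 0 (by decide); have d12 := D 1 2 (by decide)
      have d20 := D 2 0 (by decide); have d21 := D 2 1 (by decide)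
      have v01 := V 0 1 (by decide); have v02 := V 0 2 (by decide)
      have v10 := V 1 0 (by decide); have v12 := V 1 2 (by decide)
      have v20 := V 2 0 (by decide); have v21 := V 2 1 (by decide)
      have c0 := hXlt 0; have c0' := hYge 0
      have c1 := hXlt 1; have c1' := hYge 1
      have c2 := hXlt 2; have c2' := hYge 2
      omega
    obtain ⟨j0, hgood⟩ := main
    simp only [BadPred] at hgood
    push_neg at hgood
    obtain ⟨x, y, hadjxy, hxlt, hyge, hxu, hyu, hxc, hyc⟩ := hgood
    have hxycross : (crossGraph (Hgraph (k+2)) pos (τ j0)).Adj x y :=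
      ⟨hadjxy, Or.inl ⟨hxlt, hyge⟩⟩
    refine ⟨τ j0, ((M j0).map (embSym (k+1) 0 j0)) ∪ {s(x, y)}, ⟨?_, ?_⟩, ?_, ?_⟩
    · intro e he
      rw [Finset.mem_coe, Finset.mem_union] at he
      rcases he with he | he
      · exact (isInducedMatching_map_emb (hind j0)).1 (Finset.mem_coe.mpr he)
      · rw [Finset.mem_singleton] at he
        subst he
        rw [SimpleGraph.mem_edgeSet]
        exact hxycross
    · intro e he f hf hef u hu v hv
      rw [Finset.mem_union] at he hf
      -- helper for mixed pairs
      have mixed : ∀ u', (∃ e' ∈ M j0, u' ∈ Sym2.map (Hemb (k+1) 0 j0) e') →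
          ∀ v' ∈ s(x, y), u' ≠ v' ∧ ¬ (crossGraph (Hgraph (k+2)) pos (τ j0)).Adj u' v' := by
        rintro u' ⟨e', he', hu'⟩ v' hv'
        rw [Sym2.mem_map] at hu'
        obtain ⟨a, ha, rfl⟩ := hu'
        have haroot : a ≠ Hroot (k+1) := fun hh => hroot j0 e' he' (hh ▸ ha)
        have hv'ne : ∀ b : HV (k+1), v' ≠ Hemb (k+1) 0 j0 b := by
          rw [Sym2.mem_iff] at hv'
          rcases hv' with rfl | rfl
          · exact hxc
          · exact hyc
        constructor
        · intro hh
          exact hv'ne a hh.symm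
        · rintro ⟨hadj', -⟩
          obtain ⟨b, hb⟩ := emb_adj_outside haroot hadj'
          exact hv'ne b hb
      rcases he with he | he <;> rcases hf with hf | hf
      · exact (isInducedMatching_map_emb (hind j0)).2 e he f hf hef u hu v hv
      · rw [Finset.mem_singleton] at hf
        subst hf
        rw [Finset.mem_map] at he
        obtain ⟨e', he', rfl⟩ := he
        exact mixed u ⟨e', he', hu⟩ v hv
      · rw [Finset.mem_singleton] at he
        subst he
        rw [Finset.mem_map] at hf
        obtain ⟨f', hf', rfl⟩ := hf
        have := mixed v ⟨f', hf', hv⟩ u hu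
        exact ⟨this.1.symm, fun hh => this.2 hh.symm⟩
      · rw [Finset.mem_singleton] at he hf
        exact absurd (he.trans hf.symm) hef
    · rw [Finset.card_union_of_disjoint, Finset.card_map, hcard, Finset.card_singleton]
      rw [Finset.disjoint_singleton_right, Finset.mem_map]
      rintro ⟨e', he', heq⟩
      have : x ∈ Sym2.map (Hemb (k+1) 0 j0) e' := by
        rw [show ((embSym (k+1) 0 j0) e' : Sym2 (HV (k+2))) = Sym2.map (Hemb (k+1) 0 j0) e'
          from rfl] at heq
        rw [heq]
        exact Sym2.mem_mk_left x y
      rw [Sym2.mem_map] at this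
      obtain ⟨a, -, ha⟩ := this
      exact hxc a ha.symm
    · intro e he
      rw [Finset.mem_union] at he
      rcases he with he | he
      · rw [Finset.mem_map] at he
        obtain ⟨e', he', rfl⟩ := he
        intro hmem
        rw [show ((embSym (k+1) 0 j0) e' : Sym2 (HV (k+2))) = Sym2.map (Hemb (k+1) 0 j0) e'
          from rfl, Sym2.mem_map] at hmem
        obtain ⟨a, -, ha⟩ := hmem
        exact Hemb_ne_Hu (ha.trans (Hroot_succ (k+1)))
      · rw [Finset.mem_singleton] at he
        subst he
        rw [Hroot_succ, Sym2.mem_iff]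
        push_neg
        exact ⟨fun hh => hxu hh.symm, fun hh => hyu hh.symm⟩

lemma le_mw_Hgraph (k : ℕ) (σ : HV k ≃ Fin (Fintype.card (HV k))) :
    k ≤ mw (Hgraph k) σ := by
  cases k with
  | zero => exact Nat.zero_le _
  | succ n =>
    obtain ⟨τ, Mm, hind, hcard, -⟩ := lowerQ (n+1) (fun v => (σ v : ℕ))
      (fun a b h => σ.injective (Fin.val_injective h))
    have hMne : Mm.Nonempty := Finset.card_pos.mp (by rw [hcard]; omega)
    obtain ⟨e, he⟩ := hMne
    obtain ⟨x, y, hxy⟩ := Sym2.exists.mp ⟨e, he⟩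
    have hmem := hind.1 (Finset.mem_coe.mpr hxy)
    rw [SimpleGraph.mem_edgeSet] at hmem
    obtain ⟨-, hcross⟩ := hmem
    simp only at hcross
    have hx := (σ x).isLt
    have hy := (σ y).isLt
    have hτ1 : 1 ≤ τ := by omega
    have hτ2 : τ < Fintype.card (HV (n+1)) := by omega
    have hle : Mm.card ≤ mim (cutGraph (Hgraph (n+1)) σ τ) := by
      rw [cutGraph_eq_crossGraph]
      exact card_le_mim hind
    calc n+1 = Mm.card := hcard.symm
      _ ≤ mim (cutGraph (Hgraph (n+1)) σ τ) := hle
      _ ≤ mw (Hgraph (n+1)) σ :=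
        Finset.le_sup (f := fun i => mim (cutGraph (Hgraph (n+1)) σ i))
          (Finset.mem_Ico.mpr ⟨hτ1, hτ2⟩)

lemma le_lmw_Hgraph (k : ℕ) : k ≤ lmw (Hgraph k) :=
  le_lmw fun σ => le_mw_Hgraph k σ

/-! ### The upper bound : the layout -/

lemma card_HV_zero : Fintype.card (HV 0) = 1 := rfl

lemma card_HV_succ (k : ℕ) :
    Fintype.card (HV (k+1)) = 9 * Fintype.card (HV k) + 4 := by
  have h : Fintype.card (HV (k+1)) =
      Fintype.card (Unit ⊕ (Fin 3 × (Unit ⊕ (Fin 3 × HV k)))) := rfl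
  rw [h]
  simp [Fintype.card_sum, Fintype.card_prod]
  ring

def vstart (c : ℕ) (m : Fin 3) : ℕ :=
  if (m:ℕ) = 0 then 3*c else if (m:ℕ) = 1 then 6*c+2 else 6*c+3

def bstart (c : ℕ) (m : Fin 3) : ℕ :=
  if (m:ℕ) = 0 then 0 else if (m:ℕ) = 1 then 3*c+2 else 6*c+4

lemma fin3 (j : Fin 3) : (j:ℕ) = 0 ∨ (j:ℕ) = 1 ∨ (j:ℕ) = 2 := by
  have := j.isLt; omega

lemma vstart_cases (c : ℕ) (m : Fin 3) :
    ((m:ℕ) = 0 ∧ vstart c m = 3*c) ∨ ((m:ℕ) = 1 ∧ vstart c m = 6*c+2) ∨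
      ((m:ℕ) = 2 ∧ vstart c m = 6*c+3) := by
  rcases fin3 m with h|h|h
  · exact Or.inl ⟨h, by simp [vstart, h]⟩
  · exact Or.inr (Or.inl ⟨h, by simp [vstart, h]⟩)
  · exact Or.inr (Or.inr ⟨h, by simp [vstart, h]⟩)

lemma bstart_cases (c : ℕ) (m : Fin 3) :
    ((m:ℕ) = 0 ∧ bstart c m = 0) ∨ ((m:ℕ) = 1 ∧ bstart c m = 3*c+2) ∨
      ((m:ℕ) = 2 ∧ bstart c m = 6*c+4) := by
  rcases fin3 m with h|h|h
  · exact Or.inl ⟨h, by simp [bstart, h]⟩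
  · exact Or.inr (Or.inl ⟨h, by simp [bstart, h]⟩)
  · exact Or.inr (Or.inr ⟨h, by simp [bstart, h]⟩)

lemma startCases (c : ℕ) (m : Fin 3) :
    ((m:ℕ) = 0 ∧ vstart c m = 3*c ∧ bstart c m = 0) ∨
    ((m:ℕ) = 1 ∧ vstart c m = 6*c+2 ∧ bstart c m = 3*c+2) ∨
    ((m:ℕ) = 2 ∧ vstart c m = 6*c+3 ∧ bstart c m = 6*c+4) := by
  rcases fin3 m with h|h|h
  · exact Or.inl ⟨h, by simp [vstart, h], by simp [bstart, h]⟩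
  · exact Or.inr (Or.inl ⟨h, by simp [vstart, h], by simp [bstart, h]⟩)
  · exact Or.inr (Or.inr ⟨h, by simp [vstart, h], by simp [bstart, h]⟩)

/-- the recursive layout of `H (k+1)` -/
def stepPos (c : ℕ) (pos0 : HV k → ℕ) : HV (k+1) → ℕ :=
  fun x => match x with
  | Sum.inl _ => 3*c+1
  | Sum.inr (m, Sum.inl _) => vstart c m
  | Sum.inr (m, Sum.inr (j, a)) => bstart c m + (j:ℕ)*c + pos0 a

variable {c : ℕ} {pos0 : HV k → ℕ}

@[simp] lemma stepPos_u : stepPos c pos0 (Hu k) = 3*c+1 := rfl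
@[simp] lemma stepPos_v (m : Fin 3) : stepPos c pos0 (Hv k m) = vstart c m := rfl
@[simp] lemma stepPos_emb (m j : Fin 3) (a : HV k) :
    stepPos c pos0 (Hemb k m j a) = bstart c m + (j:ℕ)*c + pos0 a := rfl

lemma emb_pos_eq {p p' : ℕ} {m j m' j' : Fin 3} (hp : p < c) (hp' : p' < c)
    (h : bstart c m + (j:ℕ)*c + p = bstart c m' + (j':ℕ)*c + p') :
    m = m' ∧ j = j' ∧ p = p' := by
  rcases bstart_cases c m with ⟨h1,e1⟩|⟨h1,e1⟩|⟨h1,e1⟩ <;>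
  rcases bstart_cases c m' with ⟨h2,e2⟩|⟨h2,e2⟩|⟨h2,e2⟩ <;>
  rcases fin3 j with h3|h3|h3 <;>
  rcases fin3 j' with h4|h4|h4 <;>
  rw [e1, e2, h3, h4] at h <;>
  exact ⟨Fin.ext (by omega), Fin.ext (by omega), by omega⟩

lemma stepPos_inj (hc : ∀ a, pos0 a < c) (hpos0 : Function.Injective pos0) :
    Function.Injective (stepPos c pos0) := by
  intro x y h
  rcases HV_cases x with rfl | ⟨m, rfl⟩ | ⟨m, j, a, rfl⟩ <;>
    rcases HV_cases y with rfl | ⟨m', rfl⟩ | ⟨m', j', a', rfl⟩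
  · rfl
  · rw [stepPos_u, stepPos_v] at h
    rcases vstart_cases c m' with ⟨h1,e1⟩|⟨h1,e1⟩|⟨h1,e1⟩ <;> omega
  · rw [stepPos_u, stepPos_emb] at h
    have := hc a'
    rcases bstart_cases c m' with ⟨h1,e1⟩|⟨h1,e1⟩|⟨h1,e1⟩ <;>
      rcases fin3 j' with h3|h3|h3 <;> rw [e1, h3] at h <;> omega
  · rw [stepPos_u, stepPos_v] at h
    rcases vstart_cases c m with ⟨h1,e1⟩|⟨h1,e1⟩|⟨h1,e1⟩ <;> omega
  · rw [stepPos_v, stepPos_v] at h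
    have : m = m' := by
      rcases vstart_cases c m with ⟨h1,e1⟩|⟨h1,e1⟩|⟨h1,e1⟩ <;>
        rcases vstart_cases c m' with ⟨h2,e2⟩|⟨h2,e2⟩|⟨h2,e2⟩ <;>
        exact Fin.ext (by omega)
    rw [this]
  · rw [stepPos_v, stepPos_emb] at h
    have := hc a'
    rcases vstart_cases c m with ⟨h1,e1⟩|⟨h1,e1⟩|⟨h1,e1⟩ <;>
      rcases bstart_cases c m' with ⟨h2,e2⟩|⟨h2,e2⟩|⟨h2,e2⟩ <;>
      rcases fin3 j' with h3|h3|h3 <;> rw [e1, e2, h3] at h <;> omega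
  · rw [stepPos_emb, stepPos_u] at h
    have := hc a
    rcases bstart_cases c m with ⟨h1,e1⟩|⟨h1,e1⟩|⟨h1,e1⟩ <;>
      rcases fin3 j with h3|h3|h3 <;> rw [e1, h3] at h <;> omega
  · rw [stepPos_emb, stepPos_v] at h
    have := hc a
    rcases bstart_cases c m with ⟨h1,e1⟩|⟨h1,e1⟩|⟨h1,e1⟩ <;>
      rcases vstart_cases c m' with ⟨h2,e2⟩|⟨h2,e2⟩|⟨h2,e2⟩ <;>
      rcases fin3 j with h3|h3|h3 <;> rw [e1, e2, h3] at h <;> omega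
  · rw [stepPos_emb, stepPos_emb] at h
    obtain ⟨rfl, rfl, hpp⟩ := emb_pos_eq (hc a) (hc a') h
    rw [hpos0 hpp]

lemma stepPos_lt (hc : ∀ a, pos0 a < c) : ∀ x, stepPos c pos0 x < 9*c+4 := by
  intro x
  rcases HV_cases x with rfl | ⟨m, rfl⟩ | ⟨m, j, a, rfl⟩
  · rw [stepPos_u]; omega
  · rw [stepPos_v]
    rcases vstart_cases c m with ⟨h1,e1⟩|⟨h1,e1⟩|⟨h1,e1⟩ <;> omega
  · rw [stepPos_emb]
    have := hc a
    rcases bstart_cases c m with ⟨h1,e1⟩|⟨h1,e1⟩|⟨h1,e1⟩ <;>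
      rcases fin3 j with h3|h3|h3 <;> rw [e1, h3] <;> omega

def decCopy (k : ℕ) : HV (k+1) → HV k := fun x => match x with
  | Sum.inr (_, Sum.inr (_, a)) => a
  | _ => Hroot k

@[simp] lemma decCopy_emb {m j : Fin 3} {a : HV k} : decCopy k (Hemb k m j a) = a := rfl

lemma sym2_rep {α : Type*} (e : Sym2 α) : ∃ x y, e = s(x, y) := Sym2.exists.mp ⟨e, rfl⟩

/-- non-internal edges of `H (k+1)` -/
lemma ext_shape {P : HV (k+1) → ℕ} {i : ℕ} {M : Finset (Sym2 (HV (k+1)))}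
    (hM : IsInducedMatching (crossGraph (Hgraph (k+1)) P i) M) {e : Sym2 (HV (k+1))}
    (he : e ∈ M) (hni : ¬ ∃ m j a b, e = s(Hemb k m j a, Hemb k m j b)) :
    (∃ m, e = s(Hu k, Hv k m)) ∨ ∃ m j, e = s(Hv k m, Hemb k m j (Hroot k)) := by
  obtain ⟨x, y, rfl⟩ := sym2_rep e
  have hmem := hM.1 (Finset.mem_coe.mpr he)
  rw [SimpleGraph.mem_edgeSet] at hmem
  obtain ⟨hadj, -⟩ := hmem
  rcases adj_classify hadj with ⟨m, ⟨rfl, rfl⟩ | ⟨rfl, rfl⟩⟩ |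
    ⟨m, j, ⟨rfl, rfl⟩ | ⟨rfl, rfl⟩⟩ | ⟨m, j, a, b, rfl, rfl, -⟩
  · exact Or.inl ⟨m, rfl⟩
  · exact Or.inl ⟨m, Sym2.eq_swap⟩
  · exact Or.inr ⟨m, j, rfl⟩
  · exact Or.inr ⟨m, j, Sym2.eq_swap⟩
  · exact absurd ⟨m, j, a, b, rfl⟩ hni

set_option maxHeartbeats 2000000 in
lemma step_cut_bound (hc : ∀ a, pos0 a < c)
    (hcut : ∀ (i : ℕ) (M : Finset (Sym2 (HV k))),
      IsInducedMatching (crossGraph (Hgraph k) pos0 i) M → M.card ≤ k) :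
    ∀ (i : ℕ) (M : Finset (Sym2 (HV (k+1)))),
      IsInducedMatching (crossGraph (Hgraph (k+1)) (stepPos c pos0) i) M → M.card ≤ k+1 := by
  intro i M hM
  have hp0 := hc (Hroot k)
  set P := stepPos c pos0 with hP
  -- crossing facts of an edge of M
  have crossFact : ∀ x y, s(x, y) ∈ M →
      (Hgraph (k+1)).Adj x y ∧ ((P x < i ∧ i ≤ P y) ∨ (P y < i ∧ i ≤ P x)) := by
    intro x y hxy
    have hmem := hM.1 (Finset.mem_coe.mpr hxy)
    rw [SimpleGraph.mem_edgeSet] at hmem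
    exact hmem
  classical
  set isInt : Sym2 (HV (k+1)) → Prop :=
    fun e => ∃ m j a b, e = s(Hemb k m j a, Hemb k m j b) with hisInt
  have hsplit := Finset.card_filter_add_card_filter_not (s := M) (p := isInt)
  -- ## external part
  have extCore : ∀ e ∈ M, ∀ f ∈ M, e ≠ f → (∃ m, e = s(Hu k, Hv k m)) →
      (∃ m j, f = s(Hv k m, Hemb k m j (Hroot k))) → False := by
    rintro e he f hf hef ⟨m1, rfl⟩ ⟨m2, j2, rfl⟩
    by_cases hmm : m1 = m2
    · subst hmm
      exact (hM.2 _ he _ hf hef (Hv k m1) (Sym2.mem_mk_right _ _)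
        (Hv k m1) (Sym2.mem_mk_left _ _)).1 rfl
    · obtain ⟨-, crossE⟩ := crossFact _ _ he
      obtain ⟨-, crossF⟩ := crossFact _ _ hf
      rw [hP] at crossE crossF
      simp only [stepPos_u, stepPos_v, stepPos_emb] at crossE crossF
      have hmv : (m1:ℕ) ≠ (m2:ℕ) := fun h => hmm (Fin.ext h)
      have blocker : (crossGraph (Hgraph (k+1)) P i).Adj (Hu k) (Hv k m2) := by
        refine ⟨adj_uv, ?_⟩
        rw [hP]
        simp only [stepPos_u, stepPos_v]
        rcases startCases c m1 with ⟨a1,b1,d1⟩|⟨a1,b1,d1⟩|⟨a1,b1,d1⟩ <;>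
          rcases startCases c m2 with ⟨a2,b2,d2⟩|⟨a2,b2,d2⟩|⟨a2,b2,d2⟩ <;>
          rcases fin3 j2 with h4|h4|h4 <;>
          rw [b1] at crossE <;> rw [b2, d2, h4] at crossF <;> rw [b2] <;> omega
      exact (hM.2 _ he _ hf hef (Hu k) (Sym2.mem_mk_left _ _)
        (Hv k m2) (Sym2.mem_mk_left _ _)).2 blocker
  have extExt : ∀ e ∈ M, ∀ f ∈ M, e ≠ f →
      (∃ m j, e = s(Hv k m, Hemb k m j (Hroot k))) →
      (∃ m j, f = s(Hv k m, Hemb k m j (Hroot k))) → False := by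
    rintro e he f hf hef ⟨m1, j1, rfl⟩ ⟨m2, j2, rfl⟩
    by_cases hmm : m1 = m2
    · subst hmm
      exact (hM.2 _ he _ hf hef (Hv k m1) (Sym2.mem_mk_left _ _)
        (Hv k m1) (Sym2.mem_mk_left _ _)).1 rfl
    · obtain ⟨-, crossE⟩ := crossFact _ _ he
      obtain ⟨-, crossF⟩ := crossFact _ _ hf
      rw [hP] at crossE crossF
      simp only [stepPos_u, stepPos_v, stepPos_emb] at crossE crossF
      have hmv : (m1:ℕ) ≠ (m2:ℕ) := fun h => hmm (Fin.ext h)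
      rcases startCases c m1 with ⟨a1,b1,d1⟩|⟨a1,b1,d1⟩|⟨a1,b1,d1⟩ <;>
        rcases startCases c m2 with ⟨a2,b2,d2⟩|⟨a2,b2,d2⟩|⟨a2,b2,d2⟩ <;>
        rcases fin3 j1 with h5|h5|h5 <;>
        rcases fin3 j2 with h6|h6|h6 <;>
        rw [b1, d1, h5] at crossE <;> rw [b2, d2, h6] at crossF <;> omega
  have extBound : (M.filter (fun e => ¬ isInt e)).card ≤ 1 := by
    rw [Finset.card_le_one]
    intro e he f hf
    rw [Finset.mem_filter] at he hf
    by_contra hef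
    rcases ext_shape hM he.1 he.2 with h1 | h1 <;>
      rcases ext_shape hM hf.1 hf.2 with h2 | h2
    · obtain ⟨m1, rfl⟩ := h1
      obtain ⟨m2, rfl⟩ := h2
      exact (hM.2 _ he.1 _ hf.1 hef (Hu k) (Sym2.mem_mk_left _ _)
        (Hu k) (Sym2.mem_mk_left _ _)).1 rfl
    · exact extCore e he.1 f hf.1 hef h1 h2
    · exact extCore f hf.1 e he.1 (Ne.symm hef) h2 h1
    · exact extExt e he.1 f hf.1 hef h1 h2
  -- ## internal part
  have intBound : (M.filter isInt).card ≤ k := by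
    rcases Finset.eq_empty_or_nonempty (M.filter isInt) with hemp | ⟨e0, he0⟩
    · rw [hemp]; simp
    · rw [Finset.mem_filter] at he0
      obtain ⟨he0M, m0, j0, a0, b0, rfl⟩ := he0
      -- the block of the distinguished internal edge
      set s0 : ℕ := bstart c m0 + (j0:ℕ)*c with hs0
      have cross0 := (crossFact _ _ he0M).2
      rw [hP] at cross0
      simp only [stepPos_emb] at cross0
      have hi0 : s0 < i ∧ i ≤ s0 + c := by
        have := hc a0; have := hc b0; omega
      -- every internal edge lies in the same copy
      have sameCopy : ∀ e ∈ M.filter isInt, ∃ a b,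
          e = s(Hemb k m0 j0 a, Hemb k m0 j0 b) := by
        intro e he
        rw [Finset.mem_filter] at he
        obtain ⟨heM, m, j, a, b, rfl⟩ := he
        have crossa := (crossFact _ _ heM).2
        rw [hP] at crossa
        simp only [stepPos_emb] at crossa
        have hac := hc a; have hbc := hc b
        have : m = m0 ∧ j = j0 := by
          rw [hs0] at hi0
          rcases startCases c m with ⟨x1,z1,y1⟩|⟨x1,z1,y1⟩|⟨x1,z1,y1⟩ <;>
            rcases startCases c m0 with ⟨x2,z2,y2⟩|⟨x2,z2,y2⟩|⟨x2,z2,y2⟩ <;>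
            rcases fin3 j with x3|x3|x3 <;>
            rcases fin3 j0 with x4|x4|x4 <;>
            rw [y1, x3] at crossa <;> rw [y2, x4] at hi0 <;>
            exact ⟨Fin.ext (by omega), Fin.ext (by omega)⟩
        exact ⟨a, b, by rw [this.1, this.2]⟩
      -- pull the internal edges back to `H k`
      have backmap : ∀ e ∈ M.filter isInt,
          Sym2.map (Hemb k m0 j0) (Sym2.map (decCopy k) e) = e := by
        intro e he
        obtain ⟨a, b, rfl⟩ := sameCopy e he
        rw [Sym2.map_pair_eq, Sym2.map_pair_eq, decCopy_emb, decCopy_emb]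
      set N : Finset (Sym2 (HV k)) := (M.filter isInt).image (Sym2.map (decCopy k))
        with hN
      have hNcard : N.card = (M.filter isInt).card := by
        rw [hN]
        apply Finset.card_image_of_injOn
        intro e1 h1 e2 h2 hh
        rw [Finset.mem_coe] at h1 h2
        rw [← backmap e1 h1, ← backmap e2 h2, hh]
      have hNmatch : IsInducedMatching (crossGraph (Hgraph k) pos0 (i - s0)) N := by
        constructor
        · intro f hf
          rw [Finset.mem_coe, hN, Finset.mem_image] at hf
          obtain ⟨e, he, rfl⟩ := hf
          obtain ⟨a, b, rfl⟩ := sameCopy e he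
          rw [Finset.mem_filter] at he
          obtain ⟨hadj, hcross⟩ := crossFact _ _ he.1
          rw [hP] at hcross
          simp only [stepPos_emb] at hcross
          rw [Sym2.map_pair_eq, decCopy_emb, decCopy_emb, SimpleGraph.mem_edgeSet]
          refine ⟨adj_emb_emb.mp hadj, ?_⟩
          have := hc a; have := hc b
          rw [hs0] at hi0
          omega
        · intro f1 hf1 f2 hf2 hne u hu v hv
          rw [hN, Finset.mem_image] at hf1 hf2
          obtain ⟨e1, he1, rfl⟩ := hf1
          obtain ⟨e2, he2, rfl⟩ := hf2
          obtain ⟨a1, b1, rfl⟩ := sameCopy e1 he1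
          obtain ⟨a2, b2, rfl⟩ := sameCopy e2 he2
          rw [Sym2.map_pair_eq, decCopy_emb, decCopy_emb] at hu hv
          have hee : s(Hemb k m0 j0 a1, Hemb k m0 j0 b1) ≠
              s(Hemb k m0 j0 a2, Hemb k m0 j0 b2) := by
            intro hh
            apply hne
            have hcg := congrArg (Sym2.map (decCopy k)) hh
            rwa [Sym2.map_pair_eq, Sym2.map_pair_eq, decCopy_emb, decCopy_emb,
              decCopy_emb, decCopy_emb] at hcg
          rw [Finset.mem_filter] at he1 he2
          have hu' : Hemb k m0 j0 u ∈ s(Hemb k m0 j0 a1, Hemb k m0 j0 b1) := by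
            rw [Sym2.mem_iff] at hu ⊢
            rcases hu with rfl | rfl
            · exact Or.inl rfl
            · exact Or.inr rfl
          have hv' : Hemb k m0 j0 v ∈ s(Hemb k m0 j0 a2, Hemb k m0 j0 b2) := by
            rw [Sym2.mem_iff] at hv ⊢
            rcases hv with rfl | rfl
            · exact Or.inl rfl
            · exact Or.inr rfl
          obtain ⟨hne', hnadj⟩ := hM.2 _ he1.1 _ he2.1 hee _ hu' _ hv'
          refine ⟨fun hh => hne' (by rw [hh]), fun hh => hnadj ?_⟩
          obtain ⟨hadjs, hcr⟩ := hh
          refine ⟨adj_lift hadjs, ?_⟩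
          rw [hP]
          simp only [stepPos_emb]
          have := hc u; have := hc v
          rw [hs0] at hi0
          omega
      calc (M.filter isInt).card = N.card := hNcard.symm
        _ ≤ k := hcut (i - s0) N hNmatch
  omega

lemma upperU : ∀ k : ℕ, ∃ pos : HV k → ℕ, Function.Injective pos ∧
    (∀ a, pos a < Fintype.card (HV k)) ∧
    ∀ (i : ℕ) (M : Finset (Sym2 (HV k))),
      IsInducedMatching (crossGraph (Hgraph k) pos i) M → M.card ≤ k
  | 0 => by
    refine ⟨fun _ => 0, fun a b _ => ?_, fun a => by simp [card_HV_zero], ?_⟩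
    · cases a; cases b; rfl
    · intro i M hMm
      have hME : M = ∅ := by
        rw [Finset.eq_empty_iff_forall_notMem]
        intro e he
        obtain ⟨x, y, rfl⟩ := sym2_rep e
        have hmem := hMm.1 (Finset.mem_coe.mpr he)
        rw [SimpleGraph.mem_edgeSet] at hmem
        have : (⊥ : SimpleGraph (HV 0)).Adj x y := hmem.1
        simp at this
      rw [hME]
      simp
  | k+1 => by
    obtain ⟨pos0, hinj, hlt, hcut⟩ := upperU k
    refine ⟨stepPos (Fintype.card (HV k)) pos0, stepPos_inj hlt hinj, ?_,
      step_cut_bound hlt hcut⟩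
    intro x
    rw [card_HV_succ]
    exact stepPos_lt hlt x

/-- For every `k ≥ 0`, the tree `H k` has linear MIM-width exactly `k`. -/
theorem lmw_Hgraph (k : ℕ) : lmw (Hgraph k) = k := by
  refine le_antisymm ?_ (le_lmw_Hgraph k)
  obtain ⟨pos, hinj, hlt, hcut⟩ := upperU k
  have hbij : Function.Bijective
      (fun a => (⟨pos a, hlt a⟩ : Fin (Fintype.card (HV k)))) := by
    rw [Fintype.bijective_iff_injective_and_card]
    refine ⟨fun a b h => hinj (congrArg Fin.val h), by simp⟩
  apply lmw_le (Equiv.ofBijective _ hbij)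
  apply Finset.sup_le
  intro i hi
  rw [cutGraph_eq_crossGraph]
  apply mim_le
  intro M hMm
  exact hcut i M hMm

end LMW
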